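/- Let F be a field and N, M positive integers, and let T = N + M. For any N×M matrices U and V over F, the subspace distance between the row space of the lifting [I|U] and the row space of the lifting [I|V] equals twice the rank distance between U and V: d_S(⟨[I|U]⟩, ⟨[I|V]⟩) = 2 rank(V − U). -/

import Mathlib

/-- The row space of a matrix: the subspace spanned by its rows. -/
noncomputable def rowSpace {F : Type*} [Field F] {m k : Type*} (X : Matrix m k F) :
    Submodule F (k → F) :=
  Submodule.span F (Set.range X)

/-- The subspace distance `d_S(U,V) = dim(U + V) - dim(U ∩ V)`. -/
noncomputable def subspaceDist {F : Type*} [Field F] {k : Type*}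
    (U V : Submodule F (k → F)) : ℕ :=
  Module.finrank F ↥(U ⊔ V) - Module.finrank F ↥(U ⊓ V)

/-- The lifting `[I | U]` of an `N × M` matrix `U`: the `N × (N + M)` matrix obtained
by juxtaposing the `N × N` identity matrix and `U`. -/
def lifting {F : Type*} [Field F] {N M : ℕ} (U : Matrix (Fin N) (Fin M) F) :
    Matrix (Fin N) (Fin (N + M)) F :=
  (Matrix.fromCols (1 : Matrix (Fin N) (Fin N) F) U).submatrix id finSumFinEquiv.symm

open Matrix

lemma vecMul_lifting {F : Type*} [Field F] {N M : ℕ} (W : Matrix (Fin N) (Fin M) F)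
    (x : Fin N → F) :
    x ᵥ* lifting W = Sum.elim x (x ᵥ* W) ∘ finSumFinEquiv.symm := by
  funext j
  have h1 : (x ᵥ* lifting W) j = (x ᵥ* Matrix.fromCols 1 W) (finSumFinEquiv.symm j) := rfl
  rw [h1, Matrix.vecMul_fromCols, Matrix.vecMul_one]
  rfl

lemma vecMul_lifting_castAdd {F : Type*} [Field F] {N M : ℕ} (W : Matrix (Fin N) (Fin M) F)
    (x : Fin N → F) (k : Fin N) :
    (x ᵥ* lifting W) (Fin.castAdd M k) = x k := by
  rw [vecMul_lifting]
  simp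

lemma vecMul_lifting_natAdd {F : Type*} [Field F] {N M : ℕ} (W : Matrix (Fin N) (Fin M) F)
    (x : Fin N → F) (j : Fin M) :
    (x ᵥ* lifting W) (Fin.natAdd N j) = (x ᵥ* W) j := by
  rw [vecMul_lifting]
  simp

/-- The subspace distance between the row spaces of two liftings equals twice the
rank distance: `d_S(⟨[I|U]⟩, ⟨[I|V]⟩) = 2 rank(V - U)`. -/
theorem subspaceDist_lifting_eq_two_rankDist
    {F : Type*} [Field F] (N M : ℕ) (hN : 0 < N) (hM : 0 < M)
    (U V : Matrix (Fin N) (Fin M) F) :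
    subspaceDist (rowSpace (lifting U)) (rowSpace (lifting V)) = 2 * (V - U).rank := by
  classical
  set r := (V - U).rank with hr
  set f := (lifting U).vecMulLinear with hf
  set g := (lifting V).vecMulLinear with hg
  set D := (V - U).vecMulLinear with hD
  have hrowU : rowSpace (lifting U) = LinearMap.range f := (range_vecMulLinear _).symm
  have hrowV : rowSpace (lifting V) = LinearMap.range g := (range_vecMulLinear _).symm
  -- rank-nullity for D
  have hD_rn : Module.finrank F (LinearMap.range D) + Module.finrank F (LinearMap.ker D) = N := by
    rw [LinearMap.finrank_range_add_finrank_ker]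
    simp
  have hrangeD : Module.finrank F (LinearMap.range D) = r := by
    rw [hD, range_vecMulLinear, hr, Matrix.rank_eq_finrank_span_row]
  have hkerD : Module.finrank F (LinearMap.ker D) = N - r := by omega
  have hrN : r ≤ N := by omega
  -- injectivity of f and g
  have hinjf : ∀ W : Matrix (Fin N) (Fin M) F, Function.Injective (lifting W).vecMulLinear := by
    intro W x y hxy
    funext k
    have h := congrFun hxy (Fin.castAdd M k)
    simpa only [Matrix.vecMulLinear_apply, vecMul_lifting_castAdd] using h
  have hdimf : Module.finrank F (LinearMap.range f) = N := by
    rw [LinearMap.finrank_range_of_inj (hinjf U)]; simp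
  have hdimg : Module.finrank F (LinearMap.range g) = N := by
    rw [LinearMap.finrank_range_of_inj (hinjf V)]; simp
  -- the sup is the range of the coprod
  have hsup : LinearMap.range f ⊔ LinearMap.range g = LinearMap.range (f.coprod g) :=
    (LinearMap.range_coprod f g).symm
  -- kernel of coprod ↔ kernel of D
  have hker_char : ∀ x y : Fin N → F,
      (x, y) ∈ LinearMap.ker (f.coprod g) ↔ y = -x ∧ x ∈ LinearMap.ker D := by
    intro x y
    simp only [LinearMap.mem_ker, LinearMap.coprod_apply, hf, hg, hD,
      Matrix.vecMulLinear_apply]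
    constructor
    · intro h
      have hy : y = -x := by
        funext k
        have hk := congrFun h (Fin.castAdd M k)
        simp only [Pi.add_apply, vecMul_lifting_castAdd, Pi.zero_apply] at hk
        simp only [Pi.neg_apply]
        linear_combination hk
      refine ⟨hy, ?_⟩
      funext j
      have hj := congrFun h (Fin.natAdd N j)
      simp only [Pi.add_apply, vecMul_lifting_natAdd, Pi.zero_apply, hy,
        Matrix.neg_vecMul, Pi.neg_apply] at hj
      simp only [Matrix.vecMul_sub, Pi.sub_apply, Pi.zero_apply]
      linear_combination -hj
    · rintro ⟨hy, hx⟩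
      funext j
      rcases (finSumFinEquiv.surjective j) with ⟨s, rfl⟩
      cases s with
      | inl k =>
        simp only [finSumFinEquiv_apply_left, Pi.add_apply, vecMul_lifting_castAdd,
          Pi.zero_apply, hy, Pi.neg_apply]
        ring
      | inr j =>
        have hj := congrFun hx j
        simp only [Matrix.vecMul_sub, Pi.sub_apply, Pi.zero_apply] at hj
        simp only [finSumFinEquiv_apply_right, Pi.add_apply, vecMul_lifting_natAdd,
          Pi.zero_apply, hy, Matrix.neg_vecMul, Pi.neg_apply]
        linear_combination -hj
  -- linear equiv between ker D and ker coprod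
  let e : LinearMap.ker D →ₗ[F] LinearMap.ker (f.coprod g) :=
    LinearMap.codRestrict _ ((LinearMap.id.prod (-LinearMap.id)).comp (LinearMap.ker D).subtype)
      (by
        rintro ⟨x, hx⟩
        exact (hker_char x (-x)).2 ⟨rfl, hx⟩)
  have heval : ∀ z : LinearMap.ker D,
      ((e z : (Fin N → F) × (Fin N → F))) = ((z : Fin N → F), -(z : Fin N → F)) :=
    fun z => rfl
  have hebij : Function.Bijective e := by
    constructor
    · intro a b h
      have h1 : ((a : Fin N → F), -(a : Fin N → F)) = ((b : Fin N → F), -(b : Fin N → F)) := by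
        rw [← heval a, ← heval b, h]
      exact Subtype.ext (congrArg Prod.fst h1)
    · rintro ⟨⟨x, y⟩, hxy⟩
      obtain ⟨hy, hx⟩ := (hker_char x y).1 hxy
      refine ⟨⟨x, hx⟩, Subtype.ext ?_⟩
      rw [heval]
      exact Prod.ext rfl hy.symm
  have hker_coprod : Module.finrank F (LinearMap.ker (f.coprod g)) = N - r := by
    rw [← hkerD]
    exact (LinearEquiv.finrank_eq (LinearEquiv.ofBijective e hebij)).symm
  have hsup_dim : Module.finrank F (LinearMap.range (f.coprod g)) = N + r := by
    have h := LinearMap.finrank_range_add_finrank_ker (f.coprod g)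
    rw [hker_coprod] at h
    have hdom : Module.finrank F ((Fin N → F) × (Fin N → F)) = N + N := by simp
    omega
  have hinf_dim : Module.finrank F ↥(LinearMap.range f ⊓ LinearMap.range g) = N - r := by
    have h := Submodule.finrank_sup_add_finrank_inf_eq (LinearMap.range f) (LinearMap.range g)
    rw [hdimf, hdimg, hsup, hsup_dim] at h
    omega
  rw [subspaceDist, hrowU, hrowV, hsup, hsup_dim, hinf_dim]
  omega
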